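/- Fix β ∈ (0,1), N₀ > 0, Ex > 0, and let T(σ²) = N₀ + β·Ex·σ²/(Ex + σ²). Then for any initial value σ₀² ≥ 0, the sequence defined by σ²_{t+1} = T(σ²_t) converges to the unique positive fixed point of T. -/

import Mathlib

open Filter

/-- For β ∈ (0,1), N₀ > 0, Ex > 0 and T(σ²) = N₀ + β·Ex·σ²/(Ex + σ²), any sequence
σ²_{t+1} = T(σ²_t) started from σ₀² ≥ 0 converges to the unique positive fixed point. -/
theorem stmt_3 (β N₀ Ex : ℝ) (hβ0 : 0 < β) (hβ1 : β < 1) (hN : 0 < N₀) (hEx : 0 < Ex)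
    (s : ℝ) (hs : 0 < s) (hfix : s = N₀ + β * Ex * s / (Ex + s))
    (huniq : ∀ s' : ℝ, 0 < s' → s' = N₀ + β * Ex * s' / (Ex + s') → s' = s)
    (σ : ℕ → ℝ) (h0 : 0 ≤ σ 0)
    (hrec : ∀ t, σ (t + 1) = N₀ + β * Ex * σ t / (Ex + σ t)) :
    Tendsto σ atTop (nhds s) := by
  have hds : 0 < Ex + s := by linarith
  have hpos : ∀ t, 0 ≤ σ t := by
    intro t
    induction t with
    | zero => exact h0
    | succ n ih =>
      have hd : 0 < Ex + σ n := by linarith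
      have : 0 ≤ β * Ex * σ n / (Ex + σ n) :=
        div_nonneg (by positivity) hd.le
      rw [hrec n]; linarith
  have key : ∀ t, |σ (t + 1) - s| ≤ β * |σ t - s| := by
    intro t
    have ha := hpos t
    have hd : 0 < Ex + σ t := by linarith
    have h1 : σ (t + 1) - s = β * Ex * Ex * (σ t - s) / ((Ex + σ t) * (Ex + s)) := by
      rw [hrec t]
      have hfix' : s * (Ex + s) = N₀ * (Ex + s) + β * Ex * s := by
        have h := hfix
        field_simp at h
        linarith
      field_simp
      linear_combination (-(Ex + σ t)) * hfix'
    rw [h1, abs_div, abs_mul]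
    have habs1 : |β * Ex * Ex| = β * Ex * Ex := abs_of_pos (by positivity)
    have habs2 : |(Ex + σ t) * (Ex + s)| = (Ex + σ t) * (Ex + s) :=
      abs_of_pos (mul_pos hd hds)
    rw [habs1, habs2]
    rw [div_le_iff₀ (mul_pos hd hds)]
    have hEx2 : Ex * Ex ≤ (Ex + σ t) * (Ex + s) := by nlinarith
    have h2 := mul_le_mul_of_nonneg_left hEx2 (mul_nonneg hβ0.le (abs_nonneg (σ t - s)))
    nlinarith [h2]
  have key2 : ∀ t, |σ t - s| ≤ β ^ t * |σ 0 - s| := by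
    intro t
    induction t with
    | zero => simp
    | succ n ih =>
      calc |σ (n + 1) - s| ≤ β * |σ n - s| := key n
        _ ≤ β * (β ^ n * |σ 0 - s|) := by nlinarith
        _ = β ^ (n + 1) * |σ 0 - s| := by ring
  have hlim : Tendsto (fun t => β ^ t * |σ 0 - s|) atTop (nhds 0) := by
    have := tendsto_pow_atTop_nhds_zero_of_lt_one hβ0.le hβ1
    simpa using this.mul_const |σ 0 - s|
  rw [tendsto_iff_dist_tendsto_zero]
  apply squeeze_zero (fun t => dist_nonneg) _ hlim
  intro t
  simpa [Real.dist_eq] using key2 t
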